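/- Let A, B be 2×2 positive definite Hermitian matrices with det A = det B = 1. Then for t ∈ [0,1], the weighted spectral geometric mean satisfies A ♮_t B = (A^{-1} + B)^t A (A^{-1} + B)^t / (2 + tr(AB))^t. -/

import Mathlib

open scoped Matrix.Norms.L2Operator ComplexOrder

variable {n : Type*} [Fintype n] [DecidableEq n]

/-- Real power of a (Hermitian) matrix via the continuous functional calculus. -/
noncomputable def mpow (A : Matrix n n ℂ) (t : ℝ) : Matrix n n ℂ :=
  cfc (fun x : ℝ => x ^ t) A

/-- Matrix logarithm via the continuous functional calculus. -/
noncomputable def mlog (A : Matrix n n ℂ) : Matrix n n ℂ :=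
  cfc Real.log A

/-- The geometric mean `A # B = A^{1/2} (A^{-1/2} B A^{-1/2})^{1/2} A^{1/2}`. -/
noncomputable def geo (A B : Matrix n n ℂ) : Matrix n n ℂ :=
  mpow A (1/2) * mpow (mpow A (-(1/2)) * B * mpow A (-(1/2))) (1/2) * mpow A (1/2)

/-- The weighted geometric mean `A #ₜ B = A^{1/2} (A^{-1/2} B A^{-1/2})^t A^{1/2}`. -/
noncomputable def wgeo (t : ℝ) (A B : Matrix n n ℂ) : Matrix n n ℂ :=
  mpow A (1/2) * mpow (mpow A (-(1/2)) * B * mpow A (-(1/2))) t * mpow A (1/2)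

/-- The weighted spectral geometric mean `A ♮ₜ B = (A⁻¹ # B)^t A (A⁻¹ # B)^t`. -/
noncomputable def sgeo (t : ℝ) (A B : Matrix n n ℂ) : Matrix n n ℂ :=
  mpow (geo A⁻¹ B) t * A * mpow (geo A⁻¹ B) t

/-- Semi-metric `d(A,B) = 2 ‖log (A⁻¹ # B)‖` (operator norm). -/
noncomputable def dsm (A B : Matrix n n ℂ) : ℝ :=
  2 * ‖mlog (geo A⁻¹ B)‖

/-- Loewner order: `Loewner A B` means `A ≤ B`, i.e. `B - A` is positive semidefinite. -/
def Loewner (A B : Matrix n n ℂ) : Prop := (B - A).PosSemidef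

section Aux
set_option linter.unusedSectionVars false
open Matrix

lemma finContOn {s : Set ℝ} (hs : s.Finite) (f : ℝ → ℝ) : ContinuousOn f s := by
  have := hs.to_subtype
  have : DiscreteTopology s := Finite.instDiscreteTopology
  rw [continuousOn_iff_continuous_restrict]
  exact continuous_of_discreteTopology

lemma specContOn (f : ℝ → ℝ) (A : Matrix n n ℂ) : ContinuousOn f (spectrum ℝ A) :=
  finContOn (Matrix.finite_real_spectrum (A := A)) f

lemma spec_pos {A : Matrix n n ℂ} (hA : A.PosDef) {x : ℝ} (hx : x ∈ spectrum ℝ A) : 0 < x := by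
  rw [hA.1.spectrum_real_eq_range_eigenvalues] at hx
  obtain ⟨i, rfl⟩ := hx
  exact hA.eigenvalues_pos i

lemma sa {A : Matrix n n ℂ} (hA : A.PosDef) : IsSelfAdjoint A := hA.1.isSelfAdjoint

lemma mpow_add {A : Matrix n n ℂ} (hA : A.PosDef) (s t : ℝ) :
    mpow A s * mpow A t = mpow A (s + t) := by
  unfold mpow
  rw [← cfc_mul _ _ A (specContOn _ A) (specContOn _ A)]
  exact cfc_congr fun x hx => (Real.rpow_add (spec_pos hA hx) s t).symm

lemma mpow_zero {A : Matrix n n ℂ} (hA : A.PosDef) : mpow A 0 = 1 := by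
  unfold mpow
  rw [cfc_congr (g := fun _ : ℝ => (1:ℝ)) fun x _ => Real.rpow_zero x]
  exact cfc_const_one ℝ A (sa hA)

lemma mpow_one {A : Matrix n n ℂ} (hA : A.PosDef) : mpow A 1 = A := by
  unfold mpow
  rw [cfc_congr (g := fun x : ℝ => x) fun x _ => Real.rpow_one x]
  exact cfc_id' ℝ A (sa hA)

lemma posDef_conj {A B : Matrix n n ℂ} (hA : A.PosDef) (hB : IsUnit B) :
    (Bᴴ * A * B).PosDef := by
  refine Matrix.PosDef.of_dotProduct_mulVec_pos (Matrix.isHermitian_conjTranspose_mul_mul B hA.1) fun x hx => ?_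
  have hinj := Matrix.mulVec_injective_iff_isUnit.mpr hB
  have h : B *ᵥ x ≠ 0 := fun h => hx (hinj (h.trans (Matrix.mulVec_zero B).symm))
  simpa only [Matrix.star_mulVec, Matrix.dotProduct_mulVec, Matrix.vecMul_vecMul] using
    hA.dotProduct_mulVec_pos h

lemma cfc_posDef {A : Matrix n n ℂ} (hA : A.PosDef) {f : ℝ → ℝ}
    (hf : ∀ x ∈ spectrum ℝ A, 0 < f x) : (cfc f A).PosDef := by
  rw [Matrix.IsHermitian.cfc_eq hA.1]
  unfold Matrix.IsHermitian.cfc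
  have hU : star (hA.1.eigenvectorUnitary : Matrix n n ℂ) *
      (hA.1.eigenvectorUnitary : Matrix n n ℂ) = 1 :=
    Unitary.star_mul_self_of_mem (SetLike.coe_mem _)
  have hU2 : (hA.1.eigenvectorUnitary : Matrix n n ℂ) *
      star (hA.1.eigenvectorUnitary : Matrix n n ℂ) = 1 :=
    Unitary.mul_star_self_of_mem (SetLike.coe_mem _)
  have hU' : IsUnit (star (hA.1.eigenvectorUnitary : Matrix n n ℂ)) :=
    ⟨⟨star (hA.1.eigenvectorUnitary : Matrix n n ℂ), _, hU, hU2⟩, rfl⟩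
  have hD : (Matrix.diagonal (RCLike.ofReal ∘ f ∘ hA.1.eigenvalues) : Matrix n n ℂ).PosDef :=
    Matrix.PosDef.diagonal fun i => by
      have := hf _ (hA.1.eigenvalues_mem_spectrum_real i)
      exact RCLike.ofReal_pos.mpr this
  have := posDef_conj hD hU'
  simpa only [Unitary.conjStarAlgAut_apply, Matrix.star_eq_conjTranspose, Matrix.conjTranspose_conjTranspose] using this

lemma mpow_posDef {A : Matrix n n ℂ} (hA : A.PosDef) (t : ℝ) : (mpow A t).PosDef :=
  cfc_posDef hA fun x hx => Real.rpow_pos_of_pos (spec_pos hA hx) t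

lemma mpow_hermitian {A : Matrix n n ℂ} (hA : A.PosDef) (t : ℝ) :
    (mpow A t)ᴴ = mpow A t := (mpow_posDef hA t).1

lemma mpow_neg_one {A : Matrix n n ℂ} (hA : A.PosDef) : mpow A (-1) = A⁻¹ := by
  have h : mpow A (-1) * A = 1 := by
    calc mpow A (-1) * A = mpow A (-1) * mpow A 1 := by rw [mpow_one hA]
    _ = mpow A (-1 + 1) := mpow_add hA _ _
    _ = 1 := by rw [show (-1 + 1 : ℝ) = 0 by norm_num, mpow_zero hA]
  exact (Matrix.inv_eq_left_inv h).symm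

lemma mpow_inv {A : Matrix n n ℂ} (hA : A.PosDef) (t : ℝ) : mpow A⁻¹ t = mpow A (-t) := by
  rw [← mpow_neg_one hA]
  unfold mpow
  rw [← cfc_comp (fun x : ℝ => x ^ t) (fun x : ℝ => x ^ (-1 : ℝ)) A (sa hA)
    (finContOn ((Matrix.finite_real_spectrum (A := A)).image _) _) (specContOn _ A)]
  exact cfc_congr fun x hx => by
    have h := spec_pos hA hx
    simp [Function.comp, Real.rpow_neg_one, Real.inv_rpow h.le, Real.rpow_neg h.le]

lemma mpow_sq {Y : Matrix n n ℂ} (hY : Y.PosDef) : mpow (Y * Y) (1/2) = Y := by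
  have hYY : Y * Y = cfc (fun x : ℝ => x * x) Y := by
    rw [cfc_mul _ _ Y (specContOn _ Y) (specContOn _ Y), cfc_id' ℝ Y (sa hY)]
  rw [hYY]
  unfold mpow
  rw [← cfc_comp (fun x : ℝ => x ^ (1/2 : ℝ)) (fun x : ℝ => x * x) Y (sa hY)
    (finContOn ((Matrix.finite_real_spectrum (A := Y)).image _) _) (specContOn _ Y)]
  rw [cfc_congr (g := fun x : ℝ => x) fun x hx => ?_]
  · exact cfc_id' ℝ Y (sa hY)
  · have h := spec_pos hY hx
    show (x * x) ^ (1/2 : ℝ) = x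
    have h2 : x * x = x ^ (2 : ℝ) := by
      rw [show (2:ℝ) = ((2:ℕ):ℝ) by norm_num, Real.rpow_natCast]; ring
    rw [h2, ← Real.rpow_mul h.le]
    norm_num

lemma mpow_smul {A : Matrix n n ℂ} (hA : A.PosDef) {c : ℝ} (hc : 0 < c) (t : ℝ) :
    mpow (c • A) t = (c ^ t) • mpow A t := by
  unfold mpow
  rw [← cfc_comp_smul c (fun x : ℝ => x ^ t) A (finContOn ((Matrix.finite_real_spectrum (A := A)).image _) _)
    (sa hA)]
  rw [cfc_congr (g := fun x : ℝ => c ^ t • x ^ t) fun x hx => ?_]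
  · exact cfc_smul (c ^ t) (fun x : ℝ => x ^ t) A (specContOn _ A)
  · have h := spec_pos hA hx
    show (c • x) ^ t = c ^ t • x ^ t
    simp [smul_eq_mul, Real.mul_rpow hc.le h.le]

lemma real_smul_c (r : ℝ) (M : Matrix n n ℂ) : r • M = (r : ℂ) • M := by
  ext i j; simp [Matrix.smul_apply, Complex.real_smul]

lemma posDef_real_smul {N : Matrix n n ℂ} (hN : N.PosDef) {c : ℝ} (hc : 0 < c) :
    (c • N).PosDef := by
  rw [real_smul_c]
  refine Matrix.PosDef.of_dotProduct_mulVec_pos ?_ fun x hx => ?_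
  · ext i j
    simp only [Matrix.conjTranspose_apply, Matrix.smul_apply, star_smul, Complex.star_def,
      Complex.conj_ofReal]
    congr 1
    calc (starRingEnd ℂ) (N j i) = Nᴴ i j := rfl
    _ = N i j := by rw [hN.1.eq]
  · rw [Matrix.smul_mulVec, dotProduct_smul, smul_eq_mul]
    exact mul_pos (Complex.zero_lt_real.mpr hc) (hN.dotProduct_mulVec_pos hx)

lemma ch2 (M : Matrix (Fin 2) (Fin 2) ℂ) : M * M + M.det • 1 = M.trace • M := by
  ext i j
  fin_cases i <;> fin_cases j <;>
    simp [Matrix.mul_apply, Fin.sum_univ_two, Matrix.det_fin_two, Matrix.trace_fin_two,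
      Matrix.one_apply] <;> ring

lemma key1 (A B : Matrix (Fin 2) (Fin 2) ℂ) (hdA : A.det = 1) (hdB : B.det = 1) :
    A⁻¹ + B * A * B = (A * B).trace • B := by
  have h1 : A⁻¹ * A = 1 := A.nonsing_inv_mul (by rw [hdA]; exact isUnit_one)
  have h2 := ch2 (A * B)
  rw [Matrix.det_mul, hdA, hdB, mul_one, one_smul] at h2
  have h3 := congrArg (A⁻¹ * ·) h2
  simp only [mul_add, mul_one, Matrix.mul_smul] at h3
  rw [show A⁻¹ * (A * B * (A * B)) = B * A * B by
        rw [mul_assoc A B, ← mul_assoc A⁻¹, h1, one_mul, ← mul_assoc],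
      show A⁻¹ * (A * B) = B by rw [← mul_assoc, h1, one_mul]] at h3
  rw [add_comm] at h3
  exact h3

lemma NAN_eq (A B : Matrix (Fin 2) (Fin 2) ℂ) (hdA : A.det = 1) (hdB : B.det = 1) :
    (A⁻¹ + B) * A * (A⁻¹ + B) = ((2 : ℂ) + (A * B).trace) • B := by
  have h1 : A⁻¹ * A = 1 := A.nonsing_inv_mul (by rw [hdA]; exact isUnit_one)
  have h1' : A * A⁻¹ = 1 := A.mul_nonsing_inv (by rw [hdA]; exact isUnit_one)
  have hk := key1 A B hdA hdB
  calc (A⁻¹ + B) * A * (A⁻¹ + B) = (1 + B * A) * (A⁻¹ + B) := by rw [add_mul, h1]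
  _ = A⁻¹ + B + (B * A * A⁻¹ + B * A * B) := by rw [add_mul, one_mul, mul_add]
  _ = A⁻¹ + B + (B + B * A * B) := by rw [mul_assoc, h1', mul_one]
  _ = (A⁻¹ + B * A * B) + ((2 : ℂ) • B) := by rw [two_smul]; abel
  _ = (A * B).trace • B + (2 : ℂ) • B := by rw [hk]
  _ = ((2 : ℂ) + (A * B).trace) • B := by rw [add_smul, add_comm]

lemma det_eq (A B : Matrix (Fin 2) (Fin 2) ℂ) (hdA : A.det = 1) (hdB : B.det = 1) :
    (A⁻¹ + B).det = 2 + (A * B).trace := by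
  have hAinv : A⁻¹ = A.adjugate := by rw [Matrix.inv_def, hdA]; simp
  rw [hAinv, Matrix.det_fin_two] at *
  simp [Matrix.trace_fin_two, Matrix.mul_apply, Fin.sum_univ_two, Matrix.add_apply,
    Matrix.adjugate_fin_two]
  linear_combination hdA + hdB

end Aux

open Matrix in
set_option maxHeartbeats 1000000 in
/-- for `2 × 2` positive definite matrices of determinant one,
`A ♮ₜ B = (A⁻¹ + B)^t A (A⁻¹ + B)^t / (2 + tr(AB))^t`. -/
theorem stmt17 (A B : Matrix (Fin 2) (Fin 2) ℂ) (hA : A.PosDef) (hB : B.PosDef)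
    (hdA : A.det = 1) (hdB : B.det = 1) {t : ℝ} (ht : t ∈ Set.Icc (0:ℝ) 1) :
    sgeo t A B = (((2 : ℂ) + (A * B).trace) ^ (t : ℂ))⁻¹ •
      (mpow (A⁻¹ + B) t * A * mpow (A⁻¹ + B) t) := by

  clear ht
  have hN : (A⁻¹ + B).PosDef := hA.inv.add hB
  have hdd : (A⁻¹ + B).det = 2 + (A * B).trace := det_eq A B hdA hdB
  have hdet : (0 : ℂ) < 2 + (A * B).trace := hdd ▸ hN.det_pos
  obtain ⟨hre, him⟩ := Complex.lt_def.mp hdet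
  simp only [Complex.zero_re, Complex.zero_im] at hre him
  set d : ℝ := ((2 : ℂ) + (A * B).trace).re with hd_def
  have hdc : ((d : ℝ) : ℂ) = 2 + (A * B).trace := by
    apply Complex.ext
    · simp [hd_def]
    · simp [hd_def, ← him]
  have hdpos : 0 < d := hre
  set c : ℝ := Real.sqrt d with hc_def
  have hc : 0 < c := Real.sqrt_pos.mpr hdpos
  have hcc : c * c = d := Real.mul_self_sqrt hdpos.le
  set M : Matrix (Fin 2) (Fin 2) ℂ := c⁻¹ • (A⁻¹ + B) with hM_def
  have hM : M.PosDef := posDef_real_smul hN (inv_pos.mpr hc)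
  have hNAN := NAN_eq A B hdA hdB
  have hMAM : M * A * M = B := by
    rw [hM_def, Matrix.smul_mul, Matrix.smul_mul, Matrix.mul_smul, smul_smul, hNAN, ← hdc,
      real_smul_c, smul_smul,
      show ((((c⁻¹ * c⁻¹ : ℝ)) : ℂ) * (d : ℂ)) = (((c⁻¹ * c⁻¹ * d : ℝ)) : ℂ) by push_cast; ring,
      show c⁻¹ * c⁻¹ * d = 1 by rw [← hcc]; field_simp,
      Complex.ofReal_one, one_smul]
  have hS : (mpow A (1/2)).PosDef := mpow_posDef hA (1/2)
  have hgeo : geo A⁻¹ B = M := by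
    unfold geo
    rw [mpow_inv hA (1/2), mpow_inv hA (-(1/2)), show (-(-(1/2)) : ℝ) = 1/2 by norm_num]
    set S := mpow A (1/2) with hS_def
    set T := mpow A (-(1/2)) with hT_def
    have hSS : S * S = A := by
      rw [hS_def, mpow_add hA, show (1/2 + 1/2 : ℝ) = 1 by norm_num, mpow_one hA]
    have hTS : T * S = 1 := by
      rw [hS_def, hT_def, mpow_add hA, show (-(1/2) + 1/2 : ℝ) = 0 by norm_num, mpow_zero hA]
    have hST : S * T = 1 := by
      rw [hS_def, hT_def, mpow_add hA, show (1/2 + -(1/2) : ℝ) = 0 by norm_num, mpow_zero hA]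
    have hSBS : S * B * S = (S * M * S) * (S * M * S) := by
      rw [← hMAM, ← hSS]
      simp only [mul_assoc]
    have hY : (S * M * S).PosDef := by
      have h := posDef_conj hM hS.isUnit
      rwa [show Sᴴ = S from hS.1] at h
    rw [hSBS, mpow_sq hY,
      show T * (S * M * S) * T = (T * S) * (M * (S * T)) by simp only [mul_assoc], hTS, hST,
      one_mul, mul_one]
  unfold sgeo
  rw [hgeo, hM_def, mpow_smul hN (inv_pos.mpr hc) t, Matrix.smul_mul, Matrix.smul_mul,
    Matrix.mul_smul, smul_smul,
    show (c⁻¹ ^ t * c⁻¹ ^ t : ℝ) = (d ^ t)⁻¹ by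
      rw [← Real.mul_rpow (inv_pos.mpr hc).le (inv_pos.mpr hc).le, ← mul_inv, hcc,
        Real.inv_rpow hdpos.le],
    real_smul_c, Complex.ofReal_inv, Complex.ofReal_cpow hdpos.le, hdc]
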